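/- Let (Ω, F, P) be a probability space, X ∈ ℝ^{n×p} with XXᵀ invertible, λ > 0, positive weights w_1,…,w_p, and let y : Ω → ℝ^n and (β̂, s) : Ω → ℝ^p × ℝ^p be measurable maps such that for every ω, the pair (β̂(ω), s(ω)) satisfies the KKT condition for the weighted lasso with response y(ω). Fix A ⊆ {1,…,p} and let E = {ω : supp(β̂(ω)) = A}, assuming P(E) > 0. Then the conditional distribution of y given E equals the conditional distribution given E of the random vector X_A β̂_A + nλ · (XXᵀ)⁻¹ X (W_A sgn(β̂_A) + W_I s_I), where I = Aᶜ, W_A sgn(β̂_A) + W_I s_I denotes the p-vector whose j-th entry is w_j sgn(β̂_j) for j ∈ A and w_j s_j for j ∈ I; that is, the pushforward measures of P(· | E) under the two maps coincide. -/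

import Mathlib

open Matrix MeasureTheory ProbabilityTheory Classical

/-- The KKT condition for the weighted lasso:
`(1/n) Xᵀ (y - X β̂) = λ W s`, with `sᵢ = sgn(β̂ᵢ)` whenever `β̂ᵢ ≠ 0`
and `|sᵢ| ≤ 1` for all `i`. -/
def lassoKKT (n p : ℕ) (X : Matrix (Fin n) (Fin p) ℝ)
    (y : Fin n → ℝ) (lam : ℝ) (w : Fin p → ℝ) (βhat s : Fin p → ℝ) : Prop :=
  ((1 / (n : ℝ)) • Xᵀ.mulVec (y - X.mulVec βhat) = lam • fun i => w i * s i) ∧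
  (∀ i, βhat i ≠ 0 → s i = Real.sign (βhat i)) ∧
  (∀ i, |s i| ≤ 1)

/-- Theorem 2, eq. (13): on the lasso selection event `E = {supp β̂ = A}`, the
conditional law of `y` given `E` coincides with the conditional law given `E` of
`X_A β̂_A + nλ (X Xᵀ)⁻¹ X (W_A sgn(β̂_A) + W_I s_I)`. -/
theorem stmt_7 {Ω : Type*} [MeasurableSpace Ω] (P : Measure Ω) [IsProbabilityMeasure P]
    (n p : ℕ) (hn : 1 ≤ n)
    (X : Matrix (Fin n) (Fin p) ℝ) (hX : IsUnit (X * Xᵀ))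
    (lam : ℝ) (hlam : 0 < lam) (w : Fin p → ℝ) (hw : ∀ i, 0 < w i)
    (y : Ω → Fin n → ℝ) (βhat s : Ω → Fin p → ℝ)
    (hy : Measurable y) (hβ : Measurable βhat) (hs : Measurable s)
    (hKKT : ∀ ω, lassoKKT n p X (y ω) lam w (βhat ω) (s ω))
    (A : Set (Fin p))
    (E : Set Ω) (hE : E = {ω | Function.support (βhat ω) = A})
    (hPE : 0 < P E) :
    Measure.map y (P[|E]) =
      Measure.map
        (fun ω =>
          X.mulVec (fun j => if βhat ω j ≠ 0 then βhat ω j else 0)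
            + ((n : ℝ) * lam) • ((X * Xᵀ)⁻¹ * X).mulVec
                (fun j => if j ∈ A then w j * Real.sign (βhat ω j) else w j * s ω j))
        (P[|E]) := by
  have hmj : ∀ j, Measurable fun ω => βhat ω j := fun j => (measurable_pi_apply j).comp hβ
  have hEmeas : MeasurableSet E := by
    have hE' : E = ⋂ j, {ω | βhat ω j ≠ 0 ↔ j ∈ A} := by
      ext ω
      simp only [hE, Set.mem_setOf_eq, Set.mem_iInter, Set.ext_iff, Function.mem_support]
    rw [hE']
    refine MeasurableSet.iInter fun j => ?_
    by_cases hj : j ∈ A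
    · simp only [hj, iff_true]
      exact ((hmj j) (measurableSet_singleton 0)).compl
    · simp only [hj, iff_false, not_not]
      exact (hmj j) (measurableSet_singleton 0)
  have key : ∀ ω ∈ E,
      (X.mulVec (fun j => if βhat ω j ≠ 0 then βhat ω j else 0)
        + ((n : ℝ) * lam) • ((X * Xᵀ)⁻¹ * X).mulVec
            (fun j => if j ∈ A then w j * Real.sign (βhat ω j) else w j * s ω j)) = y ω := by
    intro ω hω
    rw [hE] at hω
    obtain ⟨hKKT1, hKKT2, -⟩ := hKKT ω
    have hβeq : (fun j => if βhat ω j ≠ 0 then βhat ω j else 0) = βhat ω := by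
      funext j; by_cases h : βhat ω j = 0 <;> simp [h]
    have hveq : (fun j => if j ∈ A then w j * Real.sign (βhat ω j) else w j * s ω j)
        = fun j => w j * s ω j := by
      funext j
      by_cases hj : j ∈ A
      · have hne : βhat ω j ≠ 0 := by
          rw [← hω] at hj; exact hj
        simp [hj, hKKT2 j hne]
      · simp [hj]
    rw [hβeq, hveq]
    have hn0 : (n : ℝ) ≠ 0 := by
      exact_mod_cast Nat.one_le_iff_ne_zero.mp hn
    have h1 : Xᵀ.mulVec (y ω - X.mulVec (βhat ω)) = ((n : ℝ) * lam) • fun i => w i * s ω i := by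
      calc Xᵀ.mulVec (y ω - X.mulVec (βhat ω))
          = (n : ℝ) • ((1 / (n : ℝ)) • Xᵀ.mulVec (y ω - X.mulVec (βhat ω))) := by
            rw [smul_smul]; field_simp; rw [one_smul]
        _ = (n : ℝ) • (lam • fun i => w i * s ω i) := by rw [hKKT1]
        _ = ((n : ℝ) * lam) • fun i => w i * s ω i := by rw [smul_smul]
    have hinv : (X * Xᵀ)⁻¹ * (X * Xᵀ) = 1 :=
      Matrix.nonsing_inv_mul _ ((Matrix.isUnit_iff_isUnit_det _).mp hX)
    have h2 : ((n : ℝ) * lam) • ((X * Xᵀ)⁻¹ * X).mulVec (fun j => w j * s ω j)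
        = y ω - X.mulVec (βhat ω) := by
      rw [← Matrix.mulVec_smul, ← h1, Matrix.mulVec_mulVec, Matrix.mul_assoc, hinv,
        Matrix.one_mulVec]
    rw [h2]
    abel
  refine Measure.map_congr ?_
  have hae : ∀ᵐ ω ∂(P[|E]), y ω =
      (X.mulVec (fun j => if βhat ω j ≠ 0 then βhat ω j else 0)
        + ((n : ℝ) * lam) • ((X * Xᵀ)⁻¹ * X).mulVec
            (fun j => if j ∈ A then w j * Real.sign (βhat ω j) else w j * s ω j)) := by
    rw [ProbabilityTheory.cond]
    refine Measure.ae_smul_measure ?_ _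
    rw [ae_restrict_iff' hEmeas]
    exact Filter.Eventually.of_forall fun ω hω => (key ω hω).symm
  exact hae
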